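/- Let n ≥ 4 and let a, b ≥ 1. Then in the singular Hecke algebra H(SB_n), with B_{12} = σ_1 + σ_2 − (q−1) and B_{23} = σ_2 + σ_3 − (q−1): τ_1^a τ_3^b (σ_3 − σ_1) = (τ_2^b τ_1^a + τ_2^a τ_3^b)(σ_3 − σ_1) + τ_2^{a+b} (B_{12} − B_{23}). -/

import Mathlib

noncomputable section
open scoped Classical

/-- `𝕂 = ℂ(q)`. -/
abbrev K : Type := RatFunc ℂ
/-- `𝕂(z)`. -/
abbrev Kz : Type := RatFunc K
/-- the variable `q`. -/
def q : K := RatFunc.X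
/-- the variable `z`. -/
def z : Kz := RatFunc.X

/-- Generators of the singular braid monoid on `n` strands:
`s i` is `σ_{i+1}`, `si i` is `σ_{i+1}⁻¹`, `t i` is `τ_{i+1}` (0-indexed `i`). -/
inductive SBGen (n : ℕ) : Type
  | s (i : Fin (n - 1))
  | si (i : Fin (n - 1))
  | t (i : Fin (n - 1))

/-- `|i - j| = 1`. -/
def adj {n : ℕ} (i j : Fin (n - 1)) : Prop := (i : ℕ) + 1 = (j : ℕ) ∨ (j : ℕ) + 1 = (i : ℕ)
/-- `|i - j| ≥ 2`. -/
def far {n : ℕ} (i j : Fin (n - 1)) : Prop := (i : ℕ) + 2 ≤ (j : ℕ) ∨ (j : ℕ) + 2 ≤ (i : ℕ)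

open FreeMonoid in
/-- The defining relations of the singular braid monoid. -/
inductive SBRel (n : ℕ) : FreeMonoid (SBGen n) → FreeMonoid (SBGen n) → Prop
  | inv_right (i) : SBRel n (of (.s i) * of (.si i)) 1
  | inv_left (i) : SBRel n (of (.si i) * of (.s i)) 1
  | sigma_tau (i) : SBRel n (of (.s i) * of (.t i)) (of (.t i) * of (.s i))
  | braid (i j) : adj i j →
      SBRel n (of (.s i) * of (.s j) * of (.s i)) (of (.s j) * of (.s i) * of (.s j))
  | braid_tau (i j) : adj i j →
      SBRel n (of (.s i) * of (.s j) * of (.t i)) (of (.t j) * of (.s i) * of (.s j))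
  | ss_comm (i j) : far i j → SBRel n (of (.s i) * of (.s j)) (of (.s j) * of (.s i))
  | st_comm (i j) : far i j → SBRel n (of (.s i) * of (.t j)) (of (.t j) * of (.s i))
  | tt_comm (i j) : far i j → SBRel n (of (.t i) * of (.t j)) (of (.t j) * of (.t i))

/-- The congruence generated by the singular braid relations. -/
def SBcon (n : ℕ) : Con (FreeMonoid (SBGen n)) := conGen (SBRel n)

/-- The singular braid monoid `SB_n`. -/
def SB (n : ℕ) : Type := (SBcon n).Quotient

instance (n : ℕ) : Monoid (SB n) := Con.monoid _

/-- The generator `σ_{i+1}` of `SB_n`. -/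
def sσ {n : ℕ} (i : Fin (n - 1)) : SB n := (SBcon n).mk' (FreeMonoid.of (.s i))
/-- The generator `σ_{i+1}⁻¹` of `SB_n`. -/
def sσi {n : ℕ} (i : Fin (n - 1)) : SB n := (SBcon n).mk' (FreeMonoid.of (.si i))
/-- The generator `τ_{i+1}` of `SB_n`. -/
def sτ {n : ℕ} (i : Fin (n - 1)) : SB n := (SBcon n).mk' (FreeMonoid.of (.t i))

/-- Number of singular points of a generator. -/
def genDeg {n : ℕ} : SBGen n → Multiplicative ℕ
  | .t _ => Multiplicative.ofAdd 1
  | _ => 1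

/-- Number of singular points of a word. -/
def degF (n : ℕ) : FreeMonoid (SBGen n) →* Multiplicative ℕ := FreeMonoid.lift genDeg

lemma degF_rel {n : ℕ} : SBcon n ≤ Con.ker (degF n) := by
  refine Con.conGen_le.2 ?_
  rintro x y h
  rw [Con.ker_rel]
  cases h <;>
    simp [degF, genDeg, mul_comm]

/-- The number of singular points, as a monoid homomorphism. -/
def deg {n : ℕ} : SB n →* Multiplicative ℕ := Con.lift _ (degF n) degF_rel

/-- The number of singular points of a singular braid. -/
def ndeg {n : ℕ} (β : SB n) : ℕ := Multiplicative.toAdd (deg β)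

/-- `S_d B_n` : the set of singular braids on `n` strands with `d` singular points. -/
def SdB (d n : ℕ) : Set (SB n) := {β | ndeg β = d}

lemma ndeg_mul {n : ℕ} (α β : SB n) : ndeg (α * β) = ndeg α + ndeg β := by
  simp [ndeg, map_mul]

lemma ndeg_one {n : ℕ} : ndeg (1 : SB n) = 0 := by simp [ndeg]

lemma ndeg_pow {n : ℕ} (β : SB n) (m : ℕ) : ndeg (β ^ m) = m * ndeg β := by
  induction m with
  | zero => simp [ndeg_one]
  | succ m ih => rw [pow_succ, ndeg_mul, ih]; ring

lemma ndeg_sσ {n : ℕ} (i : Fin (n - 1)) : ndeg (sσ i) = 0 := rfl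

lemma ndeg_sσi {n : ℕ} (i : Fin (n - 1)) : ndeg (sσi i) = 0 := by
  rfl

lemma ndeg_sτ {n : ℕ} (i : Fin (n - 1)) : ndeg (sτ i) = 1 := by
  rfl

lemma mem_SdB {n d : ℕ} {β : SB n} (h : ndeg β = d) : β ∈ SdB d n := h
/-- The monoid algebra `𝕂[SB_n]`. -/
abbrev MA (n : ℕ) : Type := MonoidAlgebra K (SB n)

/-- The Hecke relations `σ_k² = (q-1)σ_k + q`. -/
def hrel (n : ℕ) : MA n → MA n → Prop := fun x y =>
  ∃ i : Fin (n - 1), x = (MonoidAlgebra.of K (SB n) (sσ i)) ^ 2 ∧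
    y = (q - 1) • MonoidAlgebra.of K (SB n) (sσ i) + q • 1

/-- The singular Hecke algebra `H(SB_n)`. -/
def H (n : ℕ) : Type := RingQuot (hrel n)

instance (n : ℕ) : Ring (H n) := inferInstanceAs (Ring (RingQuot (hrel n)))
instance (n : ℕ) : Algebra K (H n) := inferInstanceAs (Algebra K (RingQuot (hrel n)))

/-- The natural map `SB_n → H(SB_n)`. -/
def ιH {n : ℕ} (β : SB n) : H n := RingQuot.mkAlgHom K (hrel n) (MonoidAlgebra.of K (SB n) β)

/-- The image of `σ_{i+1}` in the singular Hecke algebra. -/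
def σH {n : ℕ} (i : Fin (n - 1)) : H n := ιH (sσ i)
/-- The image of `τ_{i+1}` in the singular Hecke algebra. -/
def τH {n : ℕ} (i : Fin (n - 1)) : H n := ιH (sτ i)

/-- Scalars inside the singular Hecke algebra. -/
def cK {n : ℕ} (c : K) : H n := algebraMap K (H n) c

/-- `H(S_d B_n)` : the 𝕂-subspace of `H(SB_n)` spanned by the braids with `d` singular points. -/
def HSd (d n : ℕ) : Submodule K (H n) := Submodule.span K (ιH '' SdB d n)

lemma ιH_mem {n d : ℕ} {β : SB n} (h : β ∈ SdB d n) : ιH β ∈ HSd d n :=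
  Submodule.subset_span ⟨β, h, rfl⟩

/-- Map on generators realizing the inclusion `SB_n ↪ SB_{n+1}`. -/
def genMap {n : ℕ} : SBGen n → SBGen (n + 1)
  | .s i => .s (Fin.castLE (by omega) i)
  | .si i => .si (Fin.castLE (by omega) i)
  | .t i => .t (Fin.castLE (by omega) i)

lemma incl_wd {n : ℕ} :
    SBcon n ≤ Con.ker ((SBcon (n + 1)).mk'.comp (FreeMonoid.map genMap)) := by
  refine Con.conGen_le.2 ?_
  rintro x y h
  rw [Con.ker_rel]
  cases h with
  | inv_right i => exact (Con.eq _).mpr (ConGen.Rel.of _ _ (SBRel.inv_right _))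
  | inv_left i => exact (Con.eq _).mpr (ConGen.Rel.of _ _ (SBRel.inv_left _))
  | sigma_tau i => exact (Con.eq _).mpr (ConGen.Rel.of _ _ (SBRel.sigma_tau _))
  | braid i j hij =>
      refine (Con.eq _).mpr (ConGen.Rel.of _ _ (SBRel.braid _ _ ?_))
      simpa [adj] using hij
  | braid_tau i j hij =>
      refine (Con.eq _).mpr (ConGen.Rel.of _ _ (SBRel.braid_tau _ _ ?_))
      simpa [adj] using hij
  | ss_comm i j hij =>
      refine (Con.eq _).mpr (ConGen.Rel.of _ _ (SBRel.ss_comm _ _ ?_))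
      simpa [far] using hij
  | st_comm i j hij =>
      refine (Con.eq _).mpr (ConGen.Rel.of _ _ (SBRel.st_comm _ _ ?_))
      simpa [far] using hij
  | tt_comm i j hij =>
      refine (Con.eq _).mpr (ConGen.Rel.of _ _ (SBRel.tt_comm _ _ ?_))
      simpa [far] using hij

/-- The natural monoid homomorphism `SB_n → SB_{n+1}`. -/
def incl {n : ℕ} : SB n →* SB (n + 1) :=
  Con.lift _ ((SBcon (n + 1)).mk'.comp (FreeMonoid.map genMap)) incl_wd

lemma degF_genMap {n : ℕ} (w : FreeMonoid (SBGen n)) :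
    degF (n + 1) (FreeMonoid.map genMap w) = degF n w := by
  change ((degF (n+1)).comp (FreeMonoid.map genMap)) w = degF n w
  refine DFunLike.congr_fun (FreeMonoid.hom_eq fun a => ?_) w
  cases a <;> rfl

lemma ndeg_incl {n : ℕ} (β : SB n) : ndeg (incl β) = ndeg β := by
  induction β using Con.induction_on with
  | H w =>
    show Multiplicative.toAdd (degF (n + 1) (FreeMonoid.map genMap w)) =
      Multiplicative.toAdd (degF n w)
    rw [degF_genMap]

/-- The generator `σ_n` of `SB_{n+2}` (0-indexed `n`), used in the Markov condition. -/
def lastGen (n : ℕ) : Fin ((n + 2) - 1) := ⟨n, by omega⟩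

/-- A collection of 𝕂-linear maps `H(S_d B_n) → 𝕂(z)`, `n ≥ 1`
(index `n` in the collection corresponds to `n+1` strands). -/
abbrev TRc (d : ℕ) : Type := ∀ n : ℕ, HSd d (n + 1) →ₗ[K] Kz

/-- The Markov trace conditions. -/
def IsMarkov (d : ℕ) (T : TRc d) : Prop :=
  (∀ (n k l : ℕ) (α β : SB (n + 1)), α ∈ SdB k (n + 1) → β ∈ SdB l (n + 1) → k + l = d →
    ∀ (h₁ : ιH (α * β) ∈ HSd d (n + 1)) (h₂ : ιH (β * α) ∈ HSd d (n + 1)),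
      T n ⟨ιH (α * β), h₁⟩ = T n ⟨ιH (β * α), h₂⟩) ∧
  (∀ (n : ℕ) (β : SB (n + 1)), β ∈ SdB d (n + 1) →
    ∀ (h₁ : ιH (incl β) ∈ HSd d (n + 2)) (h₂ : ιH β ∈ HSd d (n + 1)),
      T (n + 1) ⟨ιH (incl β), h₁⟩ = T n ⟨ιH β, h₂⟩) ∧
  (∀ (n : ℕ) (β : SB (n + 1)), β ∈ SdB d (n + 1) →
    ∀ (h₁ : ιH (incl β * sσ (lastGen n)) ∈ HSd d (n + 2)) (h₂ : ιH β ∈ HSd d (n + 1)),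
      T (n + 1) ⟨ιH (incl β * sσ (lastGen n)), h₁⟩ = z * T n ⟨ιH β, h₂⟩)

/-- `TR_d` : the 𝕂(z)-vector space of Markov traces on `{H(S_d B_n)}ₙ`. -/
def TR (d : ℕ) : Submodule Kz (TRc d) where
  carrier := {T | IsMarkov d T}
  add_mem' := by
    rintro a b ⟨ha1, ha2, ha3⟩ ⟨hb1, hb2, hb3⟩
    refine ⟨?_, ?_, ?_⟩
    · intro n k l α β hα hβ hkl h₁ h₂
      simp only [Pi.add_apply, LinearMap.add_apply,
        ha1 n k l α β hα hβ hkl h₁ h₂, hb1 n k l α β hα hβ hkl h₁ h₂]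
    · intro n β hβ h₁ h₂
      simp only [Pi.add_apply, LinearMap.add_apply, ha2 n β hβ h₁ h₂, hb2 n β hβ h₁ h₂]
    · intro n β hβ h₁ h₂
      simp only [Pi.add_apply, LinearMap.add_apply, ha3 n β hβ h₁ h₂, hb3 n β hβ h₁ h₂]
      ring
  zero_mem' := by
    refine ⟨?_, ?_, ?_⟩ <;> intros <;> simp
  smul_mem' := by
    rintro c a ⟨ha1, ha2, ha3⟩
    refine ⟨?_, ?_, ?_⟩
    · intro n k l α β hα hβ hkl h₁ h₂
      simp only [Pi.smul_apply, LinearMap.smul_apply, ha1 n k l α β hα hβ hkl h₁ h₂]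
    · intro n β hβ h₁ h₂
      simp only [Pi.smul_apply, LinearMap.smul_apply, ha2 n β hβ h₁ h₂]
    · intro n β hβ h₁ h₂
      simp only [Pi.smul_apply, LinearMap.smul_apply, ha3 n β hβ h₁ h₂, smul_eq_mul]
      ring

lemma ndeg_list_prod {n : ℕ} (l : List (SB n)) : ndeg l.prod = (l.map ndeg).sum := by
  induction l with
  | nil => simpa using ndeg_one
  | cons a l ih => simp [ndeg_mul, ih]

lemma mem_expr {m d : ℕ} (α : Fin (d + 1) → SB m) (hα : ∀ j, α j ∈ SdB 0 m)
    (idx : Fin d → Fin (m - 1)) :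
    (α 0 * (List.ofFn fun j : Fin d => sτ (idx j) * α j.succ).prod) ∈ SdB d m := by
  refine mem_SdB ?_
  rw [ndeg_mul, ndeg_list_prod, List.map_ofFn, hα 0]
  have h : (fun j : Fin d => ndeg (sτ (idx j) * α j.succ)) = fun _ => 1 := by
    funext j; rw [ndeg_mul, ndeg_sτ, hα j.succ]
  rw [show ndeg ∘ (fun j : Fin d => sτ (idx j) * α j.succ)
      = fun j : Fin d => ndeg (sτ (idx j) * α j.succ) from rfl, h]
  simp

lemma mem_exprS {m d : ℕ} (α : Fin (d + 1) → SB m) (hα : ∀ j, α j ∈ SdB 0 m)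
    (idx : Fin d → Fin (m - 1)) (S : Finset (Fin d)) :
    (α 0 * (List.ofFn fun j : Fin d =>
      (if j ∈ S then sσ (idx j) else 1) * α j.succ).prod) ∈ SdB 0 m := by
  refine mem_SdB ?_
  rw [ndeg_mul, ndeg_list_prod, List.map_ofFn, hα 0]
  have h : (fun j : Fin d => ndeg ((if j ∈ S then sσ (idx j) else 1) * α j.succ))
      = fun _ => 0 := by
    funext j
    rw [ndeg_mul, hα j.succ]
    split <;> simp [ndeg_sσ, ndeg_one]
  rw [show ndeg ∘ (fun j : Fin d => (if j ∈ S then sσ (idx j) else 1) * α j.succ)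
      = fun j : Fin d => ndeg ((if j ∈ S then sσ (idx j) else 1) * α j.succ) from rfl, h]
  simp

lemma mem_tau_pow {n : ℕ} (i : Fin (n - 1)) (d : ℕ) : (sτ i) ^ d ∈ SdB d n := by
  refine mem_SdB ?_; simp [ndeg_pow, ndeg_sτ]

lemma mem_tau_pow_sigma {n : ℕ} (i i' : Fin (n - 1)) (d : ℕ) :
    (sτ i) ^ d * sσ i' ∈ SdB d n := by
  refine mem_SdB ?_; simp [ndeg_mul, ndeg_pow, ndeg_sτ, ndeg_sσ]

lemma mem_tau_tau {n : ℕ} (i i' : Fin (n - 1)) (a b : ℕ) :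
    (sτ i) ^ a * (sτ i') ^ b ∈ SdB (a + b) n := by
  refine mem_SdB ?_; simp [ndeg_mul, ndeg_pow, ndeg_sτ]

lemma mem_tau_tau_sigma {n : ℕ} (i i' i'' : Fin (n - 1)) (a b : ℕ) :
    (sτ i) ^ a * (sτ i') ^ b * sσ i'' ∈ SdB (a + b) n := by
  refine mem_SdB ?_; simp [ndeg_mul, ndeg_pow, ndeg_sτ, ndeg_sσ]

/-- `σ_{i+1}` with out-of-range indices interpreted as `1`. -/
def sσ' (n : ℕ) (i : ℕ) : SB n := if h : i < n - 1 then sσ ⟨i, h⟩ else 1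

/-- `descChain n m = σ_{n-1} σ_{n-2} ⋯ σ_{n-m}` (1-indexed), `m` letters. -/
def descChain (n : ℕ) : ℕ → SB n
  | 0 => 1
  | m + 1 => descChain n m * sσ' n (n - 2 - m)

/-- The sets `ℬ_n` describing the standard basis of the Hecke algebra `H(B_n)`:
`ℬ_1 = {1}` and `ℬ_n = {β u : β ∈ ℬ_{n-1}, u ∈ U_n}` where
`U_n = {1, σ_{n-1}, σ_{n-1}σ_{n-2}, …, σ_{n-1}⋯σ_1}`. -/
def Bset : (n : ℕ) → Set (SB n)
  | 0 => {1}
  | n + 1 => {x | ∃ β ∈ Bset n, ∃ m ≤ n, x = incl β * descChain (n + 1) m}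

/-- The set `𝒞_{d,n}` of singular braids of the form `τ_{i_1} ⋯ τ_{i_d} β` with `β ∈ ℬ_n`. -/
def Cdn (d n : ℕ) : Set (SB n) :=
  {x | ∃ idx : Fin d → Fin (n - 1), ∃ β ∈ Bset n,
    x = (List.ofFn fun j : Fin d => sτ (idx j)).prod * β}


/-! ### Auxiliary machinery for Statement 14 -/

lemma q_ne : (q : K) ≠ 0 := RatFunc.X_ne_zero

lemma q1_ne : (q - 1 : K) ≠ 0 := by
  refine sub_ne_zero.mpr ?_
  intro h
  have h2 : (algebraMap (Polynomial ℂ) K) Polynomial.X = (algebraMap (Polynomial ℂ) K) 1 := by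
    rw [RatFunc.algebraMap_X, map_one]; exact h
  have h3 := IsFractionRing.injective (Polynomial ℂ) K h2
  simpa using congrArg Polynomial.natDegree h3

section SBrelSec
variable {n : ℕ}

lemma sb_of_rel {x y : FreeMonoid (SBGen n)} (h : SBRel n x y) :
    (SBcon n).mk' x = (SBcon n).mk' y := (Con.eq _).mpr (ConGen.Rel.of _ _ h)

lemma ιH_mul (α β : SB n) : ιH (α * β) = ιH α * ιH β := by
  unfold ιH; rw [map_mul, map_mul]; rfl

lemma H_sigma_tau (i : Fin (n-1)) : σH (n := n) i * τH i = τH i * σH i := by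
  have h : sσ (n := n) i * sτ i = sτ i * sσ i := by
    unfold sσ sτ
    have h0 := sb_of_rel (SBRel.sigma_tau (n := n) i)
    rw [map_mul, map_mul] at h0; exact h0
  unfold σH τH; rw [← ιH_mul, ← ιH_mul, h]

lemma H_braid {i j : Fin (n-1)} (hij : adj i j) :
    σH (n := n) i * σH j * σH i = σH j * σH i * σH j := by
  have h : sσ (n := n) i * sσ j * sσ i = sσ j * sσ i * sσ j := by
    unfold sσ
    have h0 := sb_of_rel (SBRel.braid (n := n) i j hij)
    rw [map_mul, map_mul, map_mul, map_mul] at h0; exact h0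
  unfold σH; rw [← ιH_mul, ← ιH_mul, ← ιH_mul, ← ιH_mul, h]

lemma H_braid_tau {i j : Fin (n-1)} (hij : adj i j) :
    σH (n := n) i * σH j * τH i = τH j * σH i * σH j := by
  have h : sσ (n := n) i * sσ j * sτ i = sτ j * sσ i * sσ j := by
    unfold sσ sτ
    have h0 := sb_of_rel (SBRel.braid_tau (n := n) i j hij)
    rw [map_mul, map_mul, map_mul, map_mul] at h0; exact h0
  unfold σH τH; rw [← ιH_mul, ← ιH_mul, ← ιH_mul, ← ιH_mul, h]

lemma H_st_far {i j : Fin (n-1)} (hij : far i j) :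
    σH (n := n) i * τH j = τH j * σH i := by
  have h : sσ (n := n) i * sτ j = sτ j * sσ i := by
    unfold sσ sτ
    have h0 := sb_of_rel (SBRel.st_comm (n := n) i j hij)
    rw [map_mul, map_mul] at h0; exact h0
  unfold σH τH; rw [← ιH_mul, ← ιH_mul, h]

lemma H_tt_far {i j : Fin (n-1)} (hij : far i j) :
    τH (n := n) i * τH j = τH j * τH i := by
  have h : sτ (n := n) i * sτ j = sτ j * sτ i := by
    unfold sτ
    have h0 := sb_of_rel (SBRel.tt_comm (n := n) i j hij)
    rw [map_mul, map_mul] at h0; exact h0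
  unfold τH; rw [← ιH_mul, ← ιH_mul, h]

lemma H_hecke (i : Fin (n-1)) :
    σH (n := n) i * σH i = (q - 1) • σH i + q • 1 := by
  have hr : hrel n ((MonoidAlgebra.of K (SB n) (sσ i)) ^ 2)
      ((q - 1) • MonoidAlgebra.of K (SB n) (sσ i) + q • 1) := ⟨i, rfl, rfl⟩
  have h := RingQuot.mkAlgHom_rel K hr
  rw [map_pow, map_add, map_smul, map_smul, map_one] at h
  unfold σH ιH
  exact (pow_two _).symm.trans h

end SBrelSec

section PairSec
variable {R : Type} [Ring R] [Algebra K R]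

lemma hecke_isUnit {s : R} (hs : s * s = (q-1) • s + q • 1) : IsUnit s := by
  refine ⟨⟨s, q⁻¹ • (s - (q-1) • 1), ?_, ?_⟩, rfl⟩
  · calc s * (q⁻¹ • (s - (q-1) • 1))
        = q⁻¹ • (s * s - (q-1) • (s * 1)) := by
          rw [mul_smul_comm, mul_sub, mul_smul_comm]
      _ = q⁻¹ • ((q:K) • 1) := by rw [hs, mul_one, add_sub_cancel_left]
      _ = 1 := by rw [smul_smul, inv_mul_cancel₀ q_ne, one_smul]
  · calc (q⁻¹ • (s - (q-1) • 1)) * s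
        = q⁻¹ • (s * s - (q-1) • (1 * s)) := by
          rw [smul_mul_assoc, sub_mul, smul_mul_assoc]
      _ = q⁻¹ • ((q:K) • 1) := by rw [hs, one_mul, add_sub_cancel_left]
      _ = 1 := by rw [smul_smul, inv_mul_cancel₀ q_ne, one_smul]

lemma hecke_cancel {s z w : R} (hs : s * s = (q-1) • s + q • 1)
    (h : s * z = s * w) : z = w := by
  have hu := hecke_isUnit hs
  exact hu.mul_left_cancel h

/-- From `s * z = c • z'` recover `z = c • (z' * s⁻¹)` style: we only need right
multiplication by the Hecke inverse. -/
lemma hecke_mul_inv_right {s z w : R} (hs : s * s = (q-1) • s + q • 1)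
    (h : z * s = w) : z = q⁻¹ • (w * s) - (q⁻¹ * (q-1)) • w := by
  have h1 : z * (s * s) = w * s := by rw [← mul_assoc, h]
  rw [hs] at h1
  -- z * ((q-1) • s + q • 1) = w * s
  have h2 : (q-1) • (z * s) + q • z = w * s := by
    rw [← h1, mul_add, mul_smul_comm, mul_smul_comm, mul_one]
  rw [h] at h2
  -- (q-1) • w + q • z = w * s
  have h3 : (q:K) • z = w * s - (q-1) • w := by rw [← h2]; abel
  have := congrArg (fun t => q⁻¹ • t) h3
  simpa [smul_smul, inv_mul_cancel₀ q_ne, smul_sub] using this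

structure PairRel (R : Type) [Ring R] [Algebra K R] where
  a : R
  b : R
  x : R
  y : R
  ha : a * a = (q-1) • a + q • 1
  hb : b * b = (q-1) • b + q • 1
  hbr : a * b * a = b * a * b
  hax : a * x = x * a
  hby : b * y = y * b
  habx : a * b * x = y * (a * b)
  hbay : b * a * y = x * (b * a)

namespace PairRel
variable {R : Type} [Ring R] [Algebra K R] (p : PairRel R)

def P : R := p.a * p.b * p.a
def B : R := p.a + p.b - (q-1) • 1
def v : R := p.x - p.y

lemma pp1 : p.P * p.x = p.y * p.P := by
  unfold P
  rw [mul_assoc (p.a * p.b) p.a p.x, p.hax, ← mul_assoc, p.habx, mul_assoc]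

lemma pp2 : p.P * p.y = p.x * p.P := by
  unfold P
  rw [p.hbr, mul_assoc (p.b * p.a) p.b p.y, p.hby, ← mul_assoc, p.hbay, mul_assoc, ← p.hbr]

lemma key1 : p.a * p.b * (p.b * p.a) * p.y = p.y * (p.a * p.b * (p.b * p.a)) := by
  calc p.a * p.b * (p.b * p.a) * p.y
      = p.a * p.b * (p.b * p.a * p.y) := by
        rw [mul_assoc (p.a * p.b) (p.b * p.a) p.y]
    _ = p.a * p.b * (p.x * (p.b * p.a)) := by rw [p.hbay]
    _ = p.a * p.b * p.x * (p.b * p.a) := by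
        rw [mul_assoc (p.a * p.b) p.x (p.b * p.a)]
    _ = p.y * (p.a * p.b) * (p.b * p.a) := by rw [p.habx]
    _ = p.y * (p.a * p.b * (p.b * p.a)) := by
        rw [mul_assoc p.y (p.a * p.b) (p.b * p.a)]

lemma expand1 : p.a * p.b * (p.b * p.a)
    = (q-1) • p.P + (q * (q-1)) • p.a + (q * q) • (1 : R) := by
  calc p.a * p.b * (p.b * p.a)
      = p.a * (p.b * p.b) * p.a := by rw [mul_assoc, ← mul_assoc p.b, ← mul_assoc, ← mul_assoc]
    _ = p.a * ((q-1) • p.b + q • 1) * p.a := by rw [p.hb]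
    _ = (q-1) • (p.a * p.b * p.a) + q • (p.a * p.a) := by
        rw [mul_add, add_mul, mul_smul_comm, mul_smul_comm, smul_mul_assoc, smul_mul_assoc,
          mul_one]
    _ = (q-1) • p.P + (q * (q-1)) • p.a + (q * q) • (1 : R) := by
        rw [p.ha, smul_add, smul_smul, smul_smul, P, add_assoc]
end PairRel
end PairSec

section PairSec2
variable {R : Type} [Ring R] [Algebra K R]

lemma smul_cancelK {c : K} (hc : c ≠ 0) {u w : R} (h : c • u = c • w) : u = w := by
  have := congrArg (fun t => c⁻¹ • t) h
  simpa [smul_smul, inv_mul_cancel₀ hc] using this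

namespace PairRel
variable (p : PairRel R)

lemma pd1 : p.P * p.y + q • (p.a * p.y) = p.y * p.P + q • (p.y * p.a) := by
  have k := p.key1
  rw [p.expand1] at k
  simp only [add_mul, mul_add, smul_mul_assoc, mul_smul_comm, one_mul, mul_one] at k
  have k2 : (q-1) • (p.P * p.y) + (q * (q-1)) • (p.a * p.y)
      = (q-1) • (p.y * p.P) + (q * (q-1)) • (p.y * p.a) := add_right_cancel k
  apply smul_cancelK q1_ne
  simp only [smul_add, smul_smul]
  rw [show (q-1) * q = q * (q-1) from mul_comm _ _]
  exact k2

lemma pe : p.P * p.v = q • (p.a * p.y) - q • (p.y * p.a) := by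
  have h1 : p.P * p.v = p.P * p.x - p.P * p.y := by rw [v, mul_sub]
  rw [h1, p.pp1]
  have := p.pd1
  -- y*P - P*y = q•(a*y) - q•(y*a)
  have h2 : p.y * p.P - p.P * p.y = q • (p.a * p.y) - q • (p.y * p.a) :=
    sub_eq_sub_iff_add_eq_add.mpr (by rw [← this]; abel)
  exact h2

lemma key2 : p.b * p.a * (p.a * p.b) * p.x = p.x * (p.b * p.a * (p.a * p.b)) := by
  calc p.b * p.a * (p.a * p.b) * p.x
      = p.b * p.a * (p.a * p.b * p.x) := by
        rw [mul_assoc (p.b * p.a) (p.a * p.b) p.x]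
    _ = p.b * p.a * (p.y * (p.a * p.b)) := by rw [p.habx]
    _ = p.b * p.a * p.y * (p.a * p.b) := by
        rw [mul_assoc (p.b * p.a) p.y (p.a * p.b)]
    _ = p.x * (p.b * p.a) * (p.a * p.b) := by rw [p.hbay]
    _ = p.x * (p.b * p.a * (p.a * p.b)) := by
        rw [mul_assoc p.x (p.b * p.a) (p.a * p.b)]

lemma expand2 : p.b * p.a * (p.a * p.b)
    = (q-1) • p.P + (q * (q-1)) • p.b + (q * q) • (1 : R) := by
  calc p.b * p.a * (p.a * p.b)
      = p.b * (p.a * p.a) * p.b := by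
        rw [mul_assoc, ← mul_assoc p.a, ← mul_assoc, ← mul_assoc]
    _ = p.b * ((q-1) • p.a + q • 1) * p.b := by rw [p.ha]
    _ = (q-1) • (p.b * p.a * p.b) + q • (p.b * p.b) := by
        rw [mul_add, add_mul, mul_smul_comm, mul_smul_comm, smul_mul_assoc, smul_mul_assoc,
          mul_one]
    _ = (q-1) • p.P + (q * (q-1)) • p.b + (q * q) • (1 : R) := by
        rw [p.hb, smul_add, smul_smul, smul_smul, P, p.hbr, add_assoc]

lemma pd2 : p.P * p.x + q • (p.b * p.x) = p.x * p.P + q • (p.x * p.b) := by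
  have k := p.key2
  rw [p.expand2] at k
  simp only [add_mul, mul_add, smul_mul_assoc, mul_smul_comm, one_mul, mul_one] at k
  have k2 : (q-1) • (p.P * p.x) + (q * (q-1)) • (p.b * p.x)
      = (q-1) • (p.x * p.P) + (q * (q-1)) • (p.x * p.b) := add_right_cancel k
  apply smul_cancelK q1_ne
  simp only [smul_add, smul_smul]
  rw [show (q-1) * q = q * (q-1) from mul_comm _ _]
  exact k2

lemma pe' : p.P * p.v = q • (p.x * p.b) - q • (p.b * p.x) := by
  have h1 : p.P * p.v = p.P * p.x - p.P * p.y := by rw [v, mul_sub]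
  rw [h1, p.pp2]
  have := p.pd2
  have h2 : p.P * p.x - p.x * p.P = q • (p.x * p.b) - q • (p.b * p.x) :=
    sub_eq_sub_iff_add_eq_add.mpr (this.trans (add_comm _ _))
  exact h2

end PairRel
end PairSec2

section PairSec3
variable {R : Type} [Ring R] [Algebra K R]
namespace PairRel
variable (p : PairRel R)

lemma pf : p.P * p.v * p.b = (-q) • (p.a * p.b * p.v) := by
  have e1 : p.a * p.y * p.b = p.a * p.b * p.y := by
    rw [mul_assoc, ← p.hby, ← mul_assoc]
  have e2 : p.y * p.a * p.b = p.a * p.b * p.x := by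
    rw [mul_assoc]; exact p.habx.symm
  calc p.P * p.v * p.b = (q • (p.a * p.y) - q • (p.y * p.a)) * p.b := by rw [p.pe]
    _ = q • (p.a * p.y * p.b) - q • (p.y * p.a * p.b) := by
        rw [sub_mul, smul_mul_assoc, smul_mul_assoc]
    _ = q • (p.a * p.b * p.y) - q • (p.a * p.b * p.x) := by rw [e1, e2]
    _ = (-q) • (p.a * p.b * p.v) := by
        rw [v, mul_sub, neg_smul, smul_sub]; abel

lemma ps1 : p.a * p.v * p.b = (-q) • p.v := by
  have hu : IsUnit (p.a * p.b) := (hecke_isUnit p.ha).mul (hecke_isUnit p.hb)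
  apply hu.mul_left_cancel
  have lhs : p.a * p.b * (p.a * p.v * p.b) = p.P * p.v * p.b := by
    rw [P]; rw [mul_assoc (p.a*p.b) p.a p.v, ← mul_assoc (p.a*p.b) (p.a*p.v) p.b,
      ← mul_assoc (p.a*p.b) p.a p.v]
  rw [lhs, p.pf, mul_smul_comm]

lemma pf' : p.P * p.v * p.a = (-q) • (p.b * p.a * p.v) := by
  have e1 : p.b * p.x * p.a = p.b * p.a * p.x := by
    rw [mul_assoc, ← p.hax, ← mul_assoc]
  have e2 : p.x * p.b * p.a = p.b * p.a * p.y := by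
    rw [mul_assoc]; exact p.hbay.symm
  calc p.P * p.v * p.a = (q • (p.x * p.b) - q • (p.b * p.x)) * p.a := by rw [p.pe']
    _ = q • (p.x * p.b * p.a) - q • (p.b * p.x * p.a) := by
        rw [sub_mul, smul_mul_assoc, smul_mul_assoc]
    _ = q • (p.b * p.a * p.y) - q • (p.b * p.a * p.x) := by rw [e1, e2]
    _ = (-q) • (p.b * p.a * p.v) := by
        rw [v, mul_sub, neg_smul, smul_sub]; abel

lemma ps2 : p.b * p.v * p.a = (-q) • p.v := by
  have hu : IsUnit (p.b * p.a) := (hecke_isUnit p.hb).mul (hecke_isUnit p.ha)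
  apply hu.mul_left_cancel
  have lhs : p.b * p.a * (p.b * p.v * p.a) = p.P * p.v * p.a := by
    rw [P, p.hbr]; rw [mul_assoc (p.b*p.a) p.b p.v, ← mul_assoc (p.b*p.a) (p.b*p.v) p.a,
      ← mul_assoc (p.b*p.a) p.b p.v]
  rw [lhs, p.pf', mul_smul_comm]

lemma psl1 : p.a * p.v + p.v * p.b = (q-1) • p.v := by
  have h := hecke_mul_inv_right p.hb p.ps1
  rw [smul_mul_assoc, smul_smul, smul_smul] at h
  rw [show q⁻¹ * -q = -1 by rw [mul_neg, inv_mul_cancel₀ q_ne],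
    show q⁻¹ * (q-1) * -q = -(q-1) by
      rw [mul_comm q⁻¹ (q-1), mul_assoc, mul_neg, inv_mul_cancel₀ q_ne, mul_neg, mul_one]] at h
  rw [h, neg_smul, neg_smul, one_smul]; abel

lemma psl2 : p.b * p.v + p.v * p.a = (q-1) • p.v := by
  have h := hecke_mul_inv_right p.ha p.ps2
  rw [smul_mul_assoc, smul_smul, smul_smul] at h
  rw [show q⁻¹ * -q = -1 by rw [mul_neg, inv_mul_cancel₀ q_ne],
    show q⁻¹ * (q-1) * -q = -(q-1) by
      rw [mul_comm q⁻¹ (q-1), mul_assoc, mul_neg, inv_mul_cancel₀ q_ne, mul_neg, mul_one]] at h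
  rw [h, neg_smul, neg_smul, one_smul]; abel

lemma pc1 : p.B * p.v = -(p.v * p.B) := by
  have hBv : p.B * p.v = p.a * p.v + p.b * p.v - (q-1) • p.v := by
    rw [B, sub_mul, add_mul, smul_mul_assoc, one_mul]
  have hvB : p.v * p.B = p.v * p.a + p.v * p.b - (q-1) • p.v := by
    rw [B, mul_sub, mul_add, mul_smul_comm, mul_one]
  have hz : p.B * p.v + p.v * p.B = 0 := by
    rw [hBv, hvB]
    have e : p.a * p.v + p.b * p.v - (q-1) • p.v + (p.v * p.a + p.v * p.b - (q-1) • p.v)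
        = (p.a * p.v + p.v * p.b) + (p.b * p.v + p.v * p.a)
          - (q-1) • p.v - (q-1) • p.v := by abel
    rw [e, p.psl1, p.psl2]; abel
  exact eq_neg_of_add_eq_zero_left hz

lemma pc2 : p.y * p.B = p.B * p.x := by
  have h2' : p.b * p.x - p.b * p.y + (p.x * p.a - p.y * p.a)
      = (q-1) • p.x - (q-1) • p.y := by
    have h := p.psl2
    rw [v, mul_sub, sub_mul, smul_sub] at h
    exact h
  have hz : p.y * p.B - p.B * p.x = 0 := by
    rw [B, mul_sub, mul_add, mul_smul_comm, mul_one, sub_mul, add_mul, smul_mul_assoc, one_mul]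
    rw [← p.hby, p.hax]
    have e : p.y * p.a + p.b * p.y - (q-1) • p.y - (p.x * p.a + p.b * p.x - (q-1) • p.x)
        = -((p.b * p.x - p.b * p.y + (p.x * p.a - p.y * p.a))
            - ((q-1) • p.x - (q-1) • p.y)) := by abel
    rw [e, h2', sub_self, neg_zero]
  exact sub_eq_zero.mp hz

lemma pc3 : p.B * p.y = p.x * p.B := by
  have h1' : p.a * p.x - p.a * p.y + (p.x * p.b - p.y * p.b)
      = (q-1) • p.x - (q-1) • p.y := by
    have h := p.psl1
    rw [v, mul_sub, sub_mul, smul_sub] at h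
    exact h
  have hz : p.B * p.y - p.x * p.B = 0 := by
    rw [B, mul_sub, mul_add, mul_smul_comm, mul_one, sub_mul, add_mul, smul_mul_assoc, one_mul]
    rw [p.hby]
    have e : p.a * p.y + p.y * p.b - (q-1) • p.y - (p.x * p.a + p.x * p.b - (q-1) • p.x)
        = -((p.a * p.x - p.a * p.y + (p.x * p.b - p.y * p.b))
            - ((q-1) • p.x - (q-1) • p.y)) + (p.a * p.x - p.x * p.a) := by abel
    rw [e, h1', p.hax, sub_self, neg_zero, sub_self, zero_add]
  exact sub_eq_zero.mp hz

lemma pc4 : p.y * p.a = p.a * p.y + p.B * p.v := by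
  have e1 : p.y * p.B - p.B * p.y = p.y * p.a - p.a * p.y := by
    rw [B, mul_sub, mul_add, mul_smul_comm, mul_one, sub_mul, add_mul, smul_mul_assoc, one_mul]
    rw [← p.hby]; abel
  have e2 : p.y * p.a - p.a * p.y = p.B * p.v := by
    rw [← e1, p.pc2, v, mul_sub]
  have := sub_eq_iff_eq_add.mp e2
  rw [this, add_comm]
end PairRel
end PairSec3

lemma statement14_aux {n : ℕ} (i0 i1 i2 : Fin (n - 1))
    (h01 : adj i0 i1) (h10 : adj i1 i0) (h12 : adj i1 i2) (h21 : adj i2 i1)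
    (h02 : far i0 i2) (h20 : far i2 i0) (a b : ℕ) :
    τH i0 ^ a * τH i2 ^ b * (σH i2 - σH i0)
      = (τH i1 ^ b * τH i0 ^ a + τH i1 ^ a * τH i2 ^ b) * (σH i2 - σH i0)
        + τH i1 ^ (a + b) *
          ((σH i0 + σH i1 - cK (q - 1)) - (σH i1 + σH i2 - cK (q - 1))) := by
  set s1 := σH i0 with hs1
  set s2 := σH i1 with hs2
  set s3 := σH i2 with hs3
  set t1 := τH i0 with ht1
  set t2 := τH i1 with ht2
  set t3 := τH i2 with ht3
  have st3 : s3 * t3 = t3 * s3 := H_sigma_tau i2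
  have st1 : s1 * t1 = t1 * s1 := H_sigma_tau i0
  have f13 : s1 * t3 = t3 * s1 := H_st_far h02
  have f31 : s3 * t1 = t1 * s3 := H_st_far h20
  have ttc : t1 * t3 = t3 * t1 := H_tt_far h02
  set v1 := t1 - t2 with hv1
  set v3 := t3 - t2 with hv3
  set B := s3 + s2 - (q - 1) • (1 : H n) with hB
  have c1 : B * v3 = -(v3 * B) := PairRel.pc1
    ⟨s3, s2, t3, t2, H_hecke i2, H_hecke i1, H_braid h21,
      H_sigma_tau i2, H_sigma_tau i1, (H_braid_tau h21).trans (mul_assoc _ _ _),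
      (H_braid_tau h12).trans (mul_assoc _ _ _)⟩
  have c2 : t2 * B = B * t3 := PairRel.pc2
    ⟨s3, s2, t3, t2, H_hecke i2, H_hecke i1, H_braid h21,
      H_sigma_tau i2, H_sigma_tau i1, (H_braid_tau h21).trans (mul_assoc _ _ _),
      (H_braid_tau h12).trans (mul_assoc _ _ _)⟩
  have c3 : B * t2 = t3 * B := PairRel.pc3
    ⟨s3, s2, t3, t2, H_hecke i2, H_hecke i1, H_braid h21,
      H_sigma_tau i2, H_sigma_tau i1, (H_braid_tau h21).trans (mul_assoc _ _ _),
      (H_braid_tau h12).trans (mul_assoc _ _ _)⟩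
  have c4 : t2 * s3 = s3 * t2 + B * v3 := PairRel.pc4
    ⟨s3, s2, t3, t2, H_hecke i2, H_hecke i1, H_braid h21,
      H_sigma_tau i2, H_sigma_tau i1, (H_braid_tau h21).trans (mul_assoc _ _ _),
      (H_braid_tau h12).trans (mul_assoc _ _ _)⟩
  have l2 : s2 * v1 + v1 * s1 = (q - 1) • v1 := PairRel.psl2
    ⟨s1, s2, t1, t2, H_hecke i0, H_hecke i1, H_braid h01,
      H_sigma_tau i0, H_sigma_tau i1, (H_braid_tau h01).trans (mul_assoc _ _ _),
      (H_braid_tau h10).trans (mul_assoc _ _ _)⟩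
  clear_value v1 v3 B s1 s2 s3 t1 t2 t3
  -- commutation of u := s3 - s1 with t1, t3
  have m4 : t3 * (s3 - s1) = (s3 - s1) * t3 := by
    rw [mul_sub, sub_mul, ← st3, ← f13]
  have m9 : t1 * (s3 - s1) = (s3 - s1) * t1 := by
    rw [mul_sub, sub_mul, ← st1, ← f31]
  -- Step B
  have m3 : v1 * (s3 - s1) = B * v1 + v3 * B := by
    have e1 : v1 * s3 = s3 * v1 + v3 * B := by
      calc v1 * s3 = t1 * s3 - t2 * s3 := by rw [hv1, sub_mul]
        _ = s3 * t1 - (s3 * t2 + B * v3) := by rw [← f31, c4]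
        _ = s3 * v1 + v3 * B := by rw [c1, hv1, mul_sub s3 t1 t2]; abel
    have e2 : v1 * s1 = (q - 1) • v1 - s2 * v1 := by
      rw [eq_sub_iff_add_eq, add_comm]; exact l2
    calc v1 * (s3 - s1) = v1 * s3 - v1 * s1 := by rw [mul_sub]
      _ = s3 * v1 + v3 * B - ((q - 1) • v1 - s2 * v1) := by rw [e1, e2]
      _ = (s3 + s2 - (q - 1) • 1) * v1 + v3 * B := by
          rw [sub_mul (s3 + s2) ((q - 1) • (1 : H n)) v1, add_mul s3 s2 v1,
            smul_mul_assoc, one_mul]; abel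
      _ = B * v1 + v3 * B := by rw [← hB]
  have m6 : v1 * t3 - t3 * v1 = t3 * t2 - t2 * t3 := by
    rw [hv1, sub_mul, mul_sub, ttc]; abel
  have m7 : v3 * t2 - t2 * v3 = t3 * t2 - t2 * t3 := by
    rw [hv3, sub_mul, mul_sub]; abel
  have m8 : B * (t3 * t2 - t2 * t3) + (t3 * t2 - t2 * t3) * B = 0 := by
    have e1 : B * (t3 * t2) = t2 * t3 * B := by
      rw [← mul_assoc, ← c2, mul_assoc, c3, ← mul_assoc]
    have e2 : B * (t2 * t3) = t3 * t2 * B := by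
      rw [← mul_assoc, c3, mul_assoc, ← c2, ← mul_assoc]
    rw [mul_sub, sub_mul, e1, e2]; abel
  have KU : (v1 * t3 - t2 * v1) * (s3 - s1) = 0 := by
    calc (v1 * t3 - t2 * v1) * (s3 - s1)
        = v1 * (t3 * (s3 - s1)) - t2 * (v1 * (s3 - s1)) := by
          rw [sub_mul, mul_assoc, mul_assoc]
      _ = v1 * (s3 - s1) * t3 - t2 * (v1 * (s3 - s1)) := by
          rw [m4, ← mul_assoc]
      _ = (B * v1 + v3 * B) * t3 - t2 * (B * v1 + v3 * B) := by rw [m3]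
      _ = B * (v1 * t3) + v3 * (B * t3) - (t2 * B * v1 + t2 * (v3 * B)) := by
          rw [add_mul, mul_add, mul_assoc B v1 t3, mul_assoc v3 B t3,
            ← mul_assoc t2 B v1]
      _ = B * (v1 * t3) + v3 * t2 * B - (B * (t3 * v1) + t2 * v3 * B) := by
          rw [← c2, mul_assoc v3 t2 B, c2, mul_assoc B t3 v1, ← mul_assoc t2 v3 B]
      _ = B * (v1 * t3 - t3 * v1) + (v3 * t2 - t2 * v3) * B := by
          rw [mul_sub, sub_mul]; abel
      _ = 0 := by rw [m6, m7]; exact m8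
  -- induction on first exponent
  have Gau : ∀ m : ℕ,
      ((t1 ^ m - t2 ^ m) * t3 - t2 * (t1 ^ m - t2 ^ m)) * (s3 - s1) = 0 := by
    intro m
    induction m with
    | zero => simp
    | succ m ih =>
      have hsplit : t1 ^ (m + 1) - t2 ^ (m + 1) = (t1 ^ m - t2 ^ m) * t1 + t2 ^ m * v1 := by
        rw [pow_succ, pow_succ, hv1, sub_mul, mul_sub]; abel
      have hG : (t1 ^ (m + 1) - t2 ^ (m + 1)) * t3 - t2 * (t1 ^ (m + 1) - t2 ^ (m + 1))
          = ((t1 ^ m - t2 ^ m) * t3 - t2 * (t1 ^ m - t2 ^ m)) * t1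
            + t2 ^ m * (v1 * t3 - t2 * v1) := by
        rw [hsplit]
        have e2 : t2 * (t2 ^ m * v1) = t2 ^ m * (t2 * v1) := by
          rw [← mul_assoc, ← pow_succ', pow_succ, mul_assoc]
        simp only [sub_mul, mul_sub, add_mul, mul_add, mul_assoc]
        rw [ttc, e2]
        abel
      rw [hG, add_mul]
      have e3 : ((t1 ^ m - t2 ^ m) * t3 - t2 * (t1 ^ m - t2 ^ m)) * t1 * (s3 - s1)
          = ((t1 ^ m - t2 ^ m) * t3 - t2 * (t1 ^ m - t2 ^ m)) * (s3 - s1) * t1 := by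
        rw [mul_assoc, m9, ← mul_assoc]
      have e4 : t2 ^ m * (v1 * t3 - t2 * v1) * (s3 - s1)
          = t2 ^ m * ((v1 * t3 - t2 * v1) * (s3 - s1)) := by
        rw [mul_assoc]
      rw [e3, e4, ih, KU, zero_mul, mul_zero, zero_add]
  -- induction on second exponent
  have Fab : (t1 ^ a * t3 ^ b - t2 ^ b * t1 ^ a - t2 ^ a * t3 ^ b + t2 ^ (a + b))
      * (s3 - s1) = 0 := by
    induction b with
    | zero =>
      have e : t1 ^ a * t3 ^ 0 - t2 ^ 0 * t1 ^ a - t2 ^ a * t3 ^ 0 + t2 ^ (a + 0)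
          = 0 := by
        simp only [pow_zero, mul_one, one_mul, add_zero]; abel
      rw [e, zero_mul]
    | succ m ih =>
      have hsplit : t1 ^ a * t3 ^ (m + 1) - t2 ^ (m + 1) * t1 ^ a - t2 ^ a * t3 ^ (m + 1)
            + t2 ^ (a + (m + 1))
          = t2 * (t1 ^ a * t3 ^ m - t2 ^ m * t1 ^ a - t2 ^ a * t3 ^ m + t2 ^ (a + m))
            + ((t1 ^ a - t2 ^ a) * t3 - t2 * (t1 ^ a - t2 ^ a)) * t3 ^ m := by
        rw [show a + (m + 1) = (a + m) + 1 from rfl]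
        simp only [pow_succ']
        simp only [mul_sub, sub_mul, mul_add, add_mul, mul_assoc]
        abel
      rw [hsplit, add_mul]
      have cm : t3 ^ m * (s3 - s1) = (s3 - s1) * t3 ^ m :=
        ((show Commute t3 (s3 - s1) from m4).pow_left m).eq
      have e3 : ((t1 ^ a - t2 ^ a) * t3 - t2 * (t1 ^ a - t2 ^ a)) * t3 ^ m * (s3 - s1)
          = ((t1 ^ a - t2 ^ a) * t3 - t2 * (t1 ^ a - t2 ^ a)) * (s3 - s1) * t3 ^ m := by
        rw [mul_assoc, cm, ← mul_assoc]
      have e4 : t2 * (t1 ^ a * t3 ^ m - t2 ^ m * t1 ^ a - t2 ^ a * t3 ^ m + t2 ^ (a + m))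
            * (s3 - s1)
          = t2 * ((t1 ^ a * t3 ^ m - t2 ^ m * t1 ^ a - t2 ^ a * t3 ^ m + t2 ^ (a + m))
            * (s3 - s1)) := by
        rw [mul_assoc]
      rw [e3, e4, ih, Gau a, zero_mul, mul_zero, zero_add]
  -- conclude
  have hBdiff : (s1 + s2 - cK (q - 1)) - (s2 + s3 - cK (q - 1)) = -(s3 - s1) := by abel
  rw [hBdiff]
  rw [← sub_eq_zero]
  have e : t1 ^ a * t3 ^ b * (s3 - s1)
        - ((t2 ^ b * t1 ^ a + t2 ^ a * t3 ^ b) * (s3 - s1) + t2 ^ (a + b) * -(s3 - s1))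
      = (t1 ^ a * t3 ^ b - t2 ^ b * t1 ^ a - t2 ^ a * t3 ^ b + t2 ^ (a + b)) * (s3 - s1) := by
    rw [mul_neg]
    simp only [add_mul, sub_mul]
    abel
  rw [e, Fab]


/-- For `n ≥ 4` and `a, b ≥ 1`, in `H(SB_n)`, with
`B₁₂ = σ₁ + σ₂ − (q−1)` and `B₂₃ = σ₂ + σ₃ − (q−1)`:
`τ₁^a τ₃^b (σ₃ − σ₁) = (τ₂^b τ₁^a + τ₂^a τ₃^b)(σ₃ − σ₁) + τ₂^{a+b} (B₁₂ − B₂₃)`. -/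
theorem statement14 (n : ℕ) (hn : 4 ≤ n) (a b : ℕ) (ha : 1 ≤ a) (hb : 1 ≤ b) :
    τH (⟨0, by omega⟩ : Fin (n - 1)) ^ a * τH (⟨2, by omega⟩ : Fin (n - 1)) ^ b *
        (σH ⟨2, by omega⟩ - σH ⟨0, by omega⟩)
      = (τH (⟨1, by omega⟩ : Fin (n - 1)) ^ b * τH (⟨0, by omega⟩ : Fin (n - 1)) ^ a
          + τH (⟨1, by omega⟩ : Fin (n - 1)) ^ a * τH (⟨2, by omega⟩ : Fin (n - 1)) ^ b) *
          (σH ⟨2, by omega⟩ - σH ⟨0, by omega⟩)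
        + τH (⟨1, by omega⟩ : Fin (n - 1)) ^ (a + b) *
          ((σH ⟨0, by omega⟩ + σH ⟨1, by omega⟩ - cK (q - 1))
            - (σH ⟨1, by omega⟩ + σH ⟨2, by omega⟩ - cK (q - 1))) := by
  exact statement14_aux (n := n) ⟨0, by omega⟩ ⟨1, by omega⟩ ⟨2, by omega⟩
    (Or.inl rfl) (Or.inr rfl) (Or.inl rfl) (Or.inr rfl)
    (Or.inl (by norm_num)) (Or.inr (by norm_num)) a b
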